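/- Let P ∈ ℝ^{n×n} be symmetric positive definite, β > 0, and let A ∈ ℝ^{n×n} satisfy A P Aᵀ ⪯ P − βI. Let λmax(P) denote the largest eigenvalue of P. Then 0 ≤ 1 − β/λmax(P) < 1, and for every e ∈ ℝⁿ, (A e)ᵀ P⁻¹ (A e) ≤ (1 − β/λmax(P)) · eᵀ P⁻¹ e. -/

import Mathlib

open Matrix

variable {n : ℕ}

lemma quad_nonneg {M : Matrix (Fin n) (Fin n) ℝ} (hM : M.PosSemidef) (x : Fin n → ℝ) :
    0 ≤ x ⬝ᵥ M *ᵥ x := by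
  have := hM.dotProduct_mulVec_nonneg x
  rwa [star_trivial] at this

lemma dotT (B : Matrix (Fin n) (Fin n) ℝ) (x y : Fin n → ℝ) :
    x ⬝ᵥ (B *ᵥ y) = (Bᵀ *ᵥ x) ⬝ᵥ y := by
  rw [dotProduct_mulVec, mulVec_transpose]

lemma herm_transpose {M : Matrix (Fin n) (Fin n) ℝ} (hM : M.IsHermitian) : Mᵀ = M := by
  ext i j
  simpa using congr_fun (congr_fun hM i) j

lemma dot_symm {M : Matrix (Fin n) (Fin n) ℝ} (hM : M.IsHermitian) (x y : Fin n → ℝ) :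
    x ⬝ᵥ M *ᵥ y = y ⬝ᵥ M *ᵥ x := by
  rw [dotT, herm_transpose hM, dotProduct_comm]

lemma cs {M : Matrix (Fin n) (Fin n) ℝ} (hM : M.PosSemidef) (x y : Fin n → ℝ) :
    (x ⬝ᵥ M *ᵥ y) ^ 2 ≤ (x ⬝ᵥ M *ᵥ x) * (y ⬝ᵥ M *ᵥ y) := by
  have key : ∀ t : ℝ, 0 ≤ (y ⬝ᵥ M *ᵥ y) * (t * t) + (2 * (x ⬝ᵥ M *ᵥ y)) * t + (x ⬝ᵥ M *ᵥ x) := by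
    intro t
    have h := quad_nonneg hM (x + t • y)
    have expand : (x + t • y) ⬝ᵥ M *ᵥ (x + t • y)
        = (y ⬝ᵥ M *ᵥ y) * (t * t) + (2 * (x ⬝ᵥ M *ᵥ y)) * t + (x ⬝ᵥ M *ᵥ x) := by
      rw [mulVec_add, mulVec_smul, add_dotProduct, smul_dotProduct, dotProduct_add,
        dotProduct_add, dotProduct_smul, dotProduct_smul, dot_symm hM.1 y x]
      simp only [smul_eq_mul]; ring
    linarith [expand ▸ h]
  have hd := discrim_le_zero key
  rw [discrim] at hd
  nlinarith

lemma real_conjT (M : Matrix (Fin n) (Fin n) ℝ) : Mᴴ = Mᵀ := by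
  ext i j; simp [conjTranspose_apply]

lemma rayleigh {P : Matrix (Fin n) (Fin n) ℝ} (hP : P.IsHermitian) (lam : ℝ)
    (hle : ∀ i, hP.eigenvalues i ≤ lam) (x : Fin n → ℝ) :
    x ⬝ᵥ P *ᵥ x ≤ lam * (x ⬝ᵥ x) := by
  set U : Matrix (Fin n) (Fin n) ℝ := (hP.eigenvectorUnitary : Matrix (Fin n) (Fin n) ℝ) with hUdef
  have hU : U * Uᵀ = 1 := by
    have := (Matrix.mem_unitaryGroup_iff).mp hP.eigenvectorUnitary.2
    rwa [Matrix.star_eq_conjTranspose, real_conjT] at this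
  set y := Uᵀ *ᵥ x with hy
  have hyy : y ⬝ᵥ y = x ⬝ᵥ x := by
    rw [hy, ← dotT, mulVec_mulVec, hU, one_mulVec]
  have hdiag : (diagonal (RCLike.ofReal ∘ hP.eigenvalues) : Matrix (Fin n) (Fin n) ℝ)
      = diagonal hP.eigenvalues := by
    congr 1
  have hform : x ⬝ᵥ P *ᵥ x = y ⬝ᵥ (diagonal hP.eigenvalues) *ᵥ y := by
    conv_lhs => rw [hP.spectral_theorem]
    rw [Unitary.conjStarAlgAut_apply, Matrix.star_eq_conjTranspose, real_conjT, ← hUdef, hdiag,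
      ← mulVec_mulVec, ← mulVec_mulVec, dotT, ← hy]
  rw [hform, ← hyy]
  have : y ⬝ᵥ (diagonal hP.eigenvalues) *ᵥ y = ∑ i, hP.eigenvalues i * (y i * y i) := by
    simp [dotProduct, mulVec_diagonal]; apply Finset.sum_congr rfl; intros; ring
  rw [this, dotProduct, Finset.mul_sum]
  apply Finset.sum_le_sum
  intro i _
  nlinarith [mul_self_nonneg (y i), hle i]

/-- If `P ≻ 0`, `β > 0`, and `A P Aᵀ ⪯ P - βI`, then with
`λmax(P)` the largest eigenvalue of `P`, we have `0 ≤ 1 - β/λmax(P) < 1` and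
`(Ae)ᵀ P⁻¹ (Ae) ≤ (1 - β/λmax(P)) eᵀ P⁻¹ e` for every `e`. -/
theorem stmt6 {n : ℕ} (hn : 0 < n) (P : Matrix (Fin n) (Fin n) ℝ) (hP : P.PosDef)
    (β : ℝ) (hβ : 0 < β) (A : Matrix (Fin n) (Fin n) ℝ)
    (hcontr : (P - β • (1 : Matrix (Fin n) (Fin n) ℝ) - A * P * Aᵀ).PosSemidef)
    (lamMax : ℝ) (hlam : lamMax = ⨆ i, hP.isHermitian.eigenvalues i) :
    (0 ≤ 1 - β / lamMax ∧ 1 - β / lamMax < 1) ∧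
      ∀ e : Fin n → ℝ,
        (A.mulVec e) ⬝ᵥ P⁻¹.mulVec (A.mulVec e) ≤
          (1 - β / lamMax) * (e ⬝ᵥ P⁻¹.mulVec e) := by
  have hne : Nonempty (Fin n) := Fin.pos_iff_nonempty.mp hn
  have hle : ∀ i, hP.isHermitian.eigenvalues i ≤ lamMax := by
    intro i
    rw [hlam]
    exact le_ciSup (Set.Finite.bddAbove (Set.finite_range _)) i
  -- A P Aᵀ is PSD
  have hAPA : (A * P * Aᵀ).PosSemidef := by
    have := hP.posSemidef.mul_mul_conjTranspose_same A
    rwa [real_conjT] at this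
  -- quadratic form bound from hcontr
  have hq : ∀ x : Fin n → ℝ,
      x ⬝ᵥ (A * P * Aᵀ) *ᵥ x ≤ x ⬝ᵥ P *ᵥ x - β * (x ⬝ᵥ x) := by
    intro x
    have h := quad_nonneg hcontr x
    rw [sub_mulVec, sub_mulVec, dotProduct_sub, dotProduct_sub, smul_mulVec,
      one_mulVec, dotProduct_smul, smul_eq_mul] at h
    linarith
  -- β ≤ lamMax
  have hβlam : β ≤ lamMax := by
    set i : Fin n := ⟨0, hn⟩
    set v : Fin n → ℝ := ⇑(hP.isHermitian.eigenvectorBasis i) with hv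
    have hvv : 0 < v ⬝ᵥ v := by
      have hne0 : v ≠ 0 := fun h => hP.isHermitian.eigenvectorBasis.orthonormal.ne_zero i ((WithLp.ofLp_eq_zero _).mp h)
      have h0 : v ⬝ᵥ v ≠ 0 := fun h => hne0 (dotProduct_self_eq_zero.mp h)
      have hnn : 0 ≤ v ⬝ᵥ v := Finset.sum_nonneg fun j _ => mul_self_nonneg _
      exact lt_of_le_of_ne hnn (Ne.symm h0)
    have hPv : P *ᵥ v = hP.isHermitian.eigenvalues i • v :=
      hP.isHermitian.mulVec_eigenvectorBasis i
    have h1 := hq v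
    have h2 := quad_nonneg hAPA v
    rw [hPv, dotProduct_smul, smul_eq_mul] at h1
    have hβi : β ≤ hP.isHermitian.eigenvalues i := by nlinarith
    exact hβi.trans (hle i)
  have hlampos : 0 < lamMax := lt_of_lt_of_le hβ hβlam
  have hc0 : 0 ≤ 1 - β / lamMax := by
    have : β / lamMax ≤ 1 := (div_le_one hlampos).mpr hβlam
    linarith
  have hc1 : 1 - β / lamMax < 1 := by
    have : 0 < β / lamMax := div_pos hβ hlampos
    linarith
  refine ⟨⟨hc0, hc1⟩, ?_⟩
  intro e
  set c := 1 - β / lamMax with hc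
  -- inverse facts
  have hdet : IsUnit P.det := isUnit_iff_ne_zero.mpr hP.det_pos.ne'
  have hPQ : P * P⁻¹ = 1 := mul_nonsing_inv P hdet
  have hQP : P⁻¹ * P = 1 := nonsing_inv_mul P hdet
  have hQpsd : P⁻¹.PosSemidef := hP.inv.posSemidef
  set Q := P⁻¹ with hQdef
  set u := A *ᵥ e with hu
  set s := u ⬝ᵥ Q *ᵥ u with hs
  set z := Q *ᵥ u with hz
  set y := Aᵀ *ᵥ z with hy2
  set w := P *ᵥ y with hw
  have hQw : Q *ᵥ w = y := by rw [hw, mulVec_mulVec, hQP, one_mulVec]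
  -- key three computations
  have h1 : e ⬝ᵥ Q *ᵥ w = s := by
    rw [hQw, hy2, dotT, transpose_transpose, ← hu]
  have h2 : w ⬝ᵥ Q *ᵥ w = y ⬝ᵥ P *ᵥ y := by
    rw [hQw, hw, dotProduct_comm, dotT, herm_transpose hP.isHermitian]
  have h3 : z ⬝ᵥ (A * P * Aᵀ) *ᵥ z = y ⬝ᵥ P *ᵥ y := by
    rw [← mulVec_mulVec, ← mulVec_mulVec, dotT]
  have hPz : P *ᵥ z = u := by rw [hz, mulVec_mulVec, hPQ, one_mulVec]
  have h4 : z ⬝ᵥ P *ᵥ z = s := by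
    rw [hPz, dotProduct_comm]
  -- contraction bound at z
  have h5 : y ⬝ᵥ P *ᵥ y ≤ c * s := by
    rw [← h3]
    have hb := hq z
    have hr := rayleigh hP.isHermitian lamMax hle z
    have hzz : 0 ≤ z ⬝ᵥ z := Finset.sum_nonneg fun j _ => mul_self_nonneg _
    have hcancel : β / lamMax * lamMax = β := div_mul_cancel₀ β hlampos.ne'
    rw [h4] at hr hb
    rw [hc]
    nlinarith [mul_le_mul_of_nonneg_left hr (le_of_lt (div_pos hβ hlampos))]
  have hs0 : 0 ≤ s := by rw [hs, hz]; exact quad_nonneg hQpsd u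
  have hq0 : 0 ≤ e ⬝ᵥ Q *ᵥ e := quad_nonneg hQpsd e
  have hcs := cs hQpsd e w
  rw [h1, h2] at hcs
  show s ≤ c * (e ⬝ᵥ Q *ᵥ e)
  rcases eq_or_lt_of_le hs0 with h | h
  · nlinarith
  · nlinarith [le_trans hcs (mul_le_mul_of_nonneg_left h5 hq0)]
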